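/- Let q be a prime power, n coprime to q, and P a μ_q-invariant subset of Z/nZ. Let C_P be the cyclic code in F_q[X]/⟨X^n−1⟩ with check polynomial f_P(X) = ∏_{i∈P}(X−θ^i), and let φ_{s,t} be the isometry a(X) ↦ a(θ^{−t}X^{s^{-1}}) mod X^n−1. Then φ_{s,t}(C_P) = C_{ρ_{s,t}(P)}. -/

import Mathlib

open Polynomial

/-- `f_P(X) = ∏_{i∈P} (X − θ^i)` for a subset `P ⊆ ℤ/nℤ`. -/
noncomputable def fPoly {E : Type*} [Field E] {n : ℕ} (θ : E) (P : Finset (ZMod n)) : E[X] :=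
  ∏ i ∈ P, (X - C (θ ^ i.val))

/-- The cyclic code in `F[X]/⟨X^n−1⟩` with check polynomial `h`: the ideal
`{c : c·h = 0 in F[X]/⟨X^n−1⟩}` (for `h` a divisor of `X^n−1`, this is the
ideal generated by `(X^n−1)/h`). -/
noncomputable def cyclicCode (F : Type*) [Field F] (n : ℕ) (h : F[X]) :
    Submodule F (AdjoinRoot (X ^ n - 1 : F[X])) :=
  LinearMap.ker (LinearMap.mulRight F (AdjoinRoot.mk (X ^ n - 1 : F[X]) h))

section Aux

variable {E : Type*} [Field E] {n : ℕ} {θ : E}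

lemma theta_pow_eq_iff [NeZero n] (hθ : IsPrimitiveRoot θ n) {a b : ℕ} :
    θ ^ a = θ ^ b ↔ (a : ZMod n) = (b : ZMod n) := by
  rw [ZMod.natCast_eq_natCast_iff]
  wlog hab : a ≤ b generalizing a b
  · rw [eq_comm, Nat.ModEq.comm]; exact this (le_of_not_ge hab)
  obtain ⟨k, rfl⟩ := Nat.exists_eq_add_of_le hab
  have hθ0 : θ ^ a ≠ 0 := pow_ne_zero _ (hθ.ne_zero (NeZero.ne n))
  rw [pow_add, eq_comm, mul_right_eq_self₀, or_iff_left hθ0, hθ.pow_eq_one_iff_dvd,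
    Nat.modEq_iff_dvd' hab, Nat.add_sub_cancel_left]

lemma theta_val_inj [NeZero n] (hθ : IsPrimitiveRoot θ n) :
    Function.Injective (fun i : ZMod n => θ ^ i.val) := by
  intro a c h
  have := (theta_pow_eq_iff hθ).mp h
  rwa [ZMod.natCast_rightInverse a, ZMod.natCast_rightInverse c] at this

lemma full_prod [NeZero n] (hθ : IsPrimitiveRoot θ n) :
    (X ^ n - 1 : E[X]) = ∏ i : ZMod n, (X - C (θ ^ i.val)) := by
  have hn : 0 < n := Nat.pos_of_ne_zero (NeZero.ne n)
  have h := X_pow_sub_C_eq_prod hθ hn (one_pow n)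
  simp only [map_one, mul_one] at h
  rw [h]
  symm
  refine Finset.prod_nbij (fun i : ZMod n => i.val) (fun a _ => Finset.mem_range.mpr a.val_lt)
    (fun a _ c _ h => ?_) (fun k hk => ?_) (fun a _ => rfl)
  · exact theta_val_inj hθ (by simp only [h])
  · exact ⟨(k : ZMod n), Finset.mem_coe.mpr (Finset.mem_univ _),
      ZMod.val_cast_of_lt (Finset.mem_range.mp hk)⟩

lemma fPoly_mul_compl [NeZero n] (hθ : IsPrimitiveRoot θ n) (S : Finset (ZMod n)) :
    fPoly θ S * fPoly θ Sᶜ = X ^ n - 1 := by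
  rw [full_prod hθ, fPoly, fPoly, Finset.prod_mul_prod_compl]

lemma eval_fPoly [NeZero n] (hθ : IsPrimitiveRoot θ n) (S : Finset (ZMod n)) (j : ZMod n) :
    (fPoly θ S).eval (θ ^ j.val) = 0 ↔ j ∈ S := by
  rw [fPoly, eval_prod, Finset.prod_eq_zero_iff]
  constructor
  · rintro ⟨i, hi, h⟩
    simp only [eval_sub, eval_X, eval_C, sub_eq_zero] at h
    rwa [theta_val_inj hθ h]
  · intro hj
    exact ⟨j, hj, by simp⟩

lemma fPoly_coprime [NeZero n] (hθ : IsPrimitiveRoot θ n) {S T : Finset (ZMod n)}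
    (h : Disjoint S T) : IsCoprime (fPoly θ S) (fPoly θ T) := by
  refine IsCoprime.prod_left fun i hi => IsCoprime.prod_right fun j hj => ?_
  exact pairwise_coprime_X_sub_C (theta_val_inj hθ)
    (fun hij => Finset.disjoint_left.mp h hi (hij ▸ hj))

end Aux

/-- if `φ_{s,t}` is the isometry `a(X) ↦ a(θ^{−t} X^{s⁻¹})` of
`F_q[X]/⟨X^n−1⟩`, then `φ_{s,t}(C_P) = C_{ρ_{s,t}(P)}` for every `μ_q`-invariant
subset `P` of `ℤ/nℤ`. -/
theorem stmt8 (F : Type*) [Field F] [Fintype F] (n : ℕ) (hn : 0 < n)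
    (hcop : Nat.Coprime (Fintype.card F) n)
    (E : Type*) [Field E] [Algebra F E] (θ : E) (hθ : IsPrimitiveRoot θ n)
    (s s' t : ℕ) (hs : Nat.Coprime s n) (hs' : s * s' ≡ 1 [MOD n])
    (ht : Fintype.card F * t ≡ t [MOD n])
    (P : Finset (ZMod n))
    (hP : P.image (fun i => (Fintype.card F : ZMod n) * i) = P)
    (fPF gF : F[X])
    (hfPF : fPF.map (algebraMap F E) = fPoly θ P)
    (hgF : gF.map (algebraMap F E) =
      fPoly θ (P.image fun i => (s : ZMod n) * (i + (t : ZMod n))))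
    (b : F) (hb : algebraMap F E b = (θ ^ t)⁻¹)
    (φ : AdjoinRoot (X ^ n - 1 : F[X]) ≃ₐ[F] AdjoinRoot (X ^ n - 1 : F[X]))
    (hφ : ∀ a : F[X], φ (AdjoinRoot.mk _ a) = AdjoinRoot.mk _ (a.comp (C b * X ^ s'))) :
    φ '' (cyclicCode F n fPF : Set (AdjoinRoot (X ^ n - 1 : F[X]))) =
      (cyclicCode F n gF : Set (AdjoinRoot (X ^ n - 1 : F[X]))) := by
  haveI : NeZero n := ⟨hn.ne'⟩
  classical
  set Q : Finset (ZMod n) := P.image (fun i => (s : ZMod n) * (i + (t : ZMod n))) with hQ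
  set ι := algebraMap F E
  set A : E[X] := (fPoly θ P).comp (C ((θ ^ t)⁻¹) * X ^ s') with hA
  have hθt : (θ : E) ^ t ≠ 0 := pow_ne_zero _ (hθ.ne_zero hn.ne')
  have hss' : (s : ZMod n) * (s' : ZMod n) = 1 := by
    have := (ZMod.natCast_eq_natCast_iff _ _ _).mpr hs'
    push_cast at this
    simpa using this
  -- key root computation for A
  have hevalA : ∀ j : ZMod n, A.eval (θ ^ j.val) = 0 ↔ j ∈ Q := by
    intro j
    rw [hA, eval_comp]
    have : eval (θ ^ j.val) (C ((θ ^ t)⁻¹) * X ^ s') = (θ ^ t)⁻¹ * θ ^ (j.val * s') := by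
      simp [pow_mul]
    rw [this, fPoly, eval_prod, Finset.prod_eq_zero_iff]
    constructor
    · rintro ⟨i, hi, h⟩
      simp only [eval_sub, eval_X, eval_C, sub_eq_zero] at h
      have h2 : θ ^ (j.val * s') = θ ^ (t + i.val) := by
        rw [pow_add]
        field_simp at h ⊢
        linear_combination h
      have h3 := (theta_pow_eq_iff hθ).mp h2
      push_cast at h3
      rw [ZMod.natCast_rightInverse j, ZMod.natCast_rightInverse i] at h3
      refine Finset.mem_image.mpr ⟨i, hi, ?_⟩
      linear_combination (-(s : ZMod n)) * h3 + j * hss'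
    · intro hj
      obtain ⟨i, hi, hij⟩ := Finset.mem_image.mp hj
      refine ⟨i, hi, ?_⟩
      simp only [eval_sub, eval_X, eval_C, sub_eq_zero]
      have h2 : θ ^ (j.val * s') = θ ^ (t + i.val) := by
        rw [theta_pow_eq_iff hθ]
        push_cast
        rw [ZMod.natCast_rightInverse j, ZMod.natCast_rightInverse i, ← hij]
        linear_combination (i + (t : ZMod n)) * hss'
      rw [h2, pow_add]
      field_simp
  have hGdvdA : fPoly θ Q ∣ A := by
    refine Finset.prod_dvd_of_coprime (fun a ha c hc hac => ?_) (fun j hj => ?_)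
    · exact pairwise_coprime_X_sub_C (theta_val_inj hθ) hac
    · exact dvd_iff_isRoot.mpr ((hevalA j).mpr hj)
  have hcop2 : IsCoprime (fPoly θ Qᶜ) A := by
    refine IsCoprime.prod_left fun j hj => ?_
    refine (irreducible_X_sub_C _).coprime_iff_not_dvd.mpr fun hdvd => ?_
    have := (hevalA j).mp (dvd_iff_isRoot.mp hdvd)
    exact (Finset.mem_compl.mp hj) this
  have hfact : fPoly θ Q * fPoly θ Qᶜ = (X ^ n - 1 : E[X]) := fPoly_mul_compl hθ Q
  -- key divisibility equivalence over E
  have keyE : ∀ h : E[X], ((X ^ n - 1 : E[X]) ∣ A * h) ↔ ((X ^ n - 1 : E[X]) ∣ fPoly θ Q * h) := by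
    intro h
    constructor
    · intro hd
      have h1 : fPoly θ Qᶜ ∣ A * h := dvd_trans (hfact ▸ dvd_mul_left _ _) hd
      have h2 : fPoly θ Qᶜ ∣ h := hcop2.dvd_of_dvd_mul_left h1
      calc (X ^ n - 1 : E[X]) = fPoly θ Q * fPoly θ Qᶜ := hfact.symm
        _ ∣ fPoly θ Q * h := mul_dvd_mul_left _ h2
    · intro hd
      exact dvd_trans hd (mul_dvd_mul_right hGdvdA h)
  -- transfer to F
  have hmapA : (fPF.comp (C b * X ^ s')).map ι = A := by
    rw [Polynomial.map_comp, hfPF]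
    simp [hb, hA]
  have keyF : ∀ c : F[X],
      ((X ^ n - 1 : F[X]) ∣ fPF.comp (C b * X ^ s') * c ↔ (X ^ n - 1 : F[X]) ∣ gF * c) := by
    intro c
    rw [← map_dvd_map' ι, ← map_dvd_map' ι (x := X ^ n - 1)]
    simp only [Polynomial.map_mul, Polynomial.map_sub, Polynomial.map_pow, map_X,
      Polynomial.map_one, hmapA, hgF]
    exact keyE _
  -- conclude
  ext x
  simp only [Set.mem_image, SetLike.mem_coe, cyclicCode, LinearMap.mem_ker,
    LinearMap.mulRight_apply]
  constructor
  · rintro ⟨y, hy, rfl⟩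
    obtain ⟨d, rfl⟩ := AdjoinRoot.mk_surjective y
    rw [hφ]
    rw [← map_mul, AdjoinRoot.mk_eq_zero] at hy ⊢
    have : (X ^ n - 1 : F[X]) ∣ fPF.comp (C b * X ^ s') * d.comp (C b * X ^ s') := by
      have := hy.trans (dvd_refl _)
      have h2 := (AdjoinRoot.mk_eq_zero (f := (X ^ n - 1 : F[X]))).mpr hy
      -- apply φ to hy
      have h3 : φ (AdjoinRoot.mk (X ^ n - 1 : F[X]) (d * fPF)) = 0 := by
        rw [(AdjoinRoot.mk_eq_zero).mpr hy, map_zero]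
      rw [hφ, AdjoinRoot.mk_eq_zero, mul_comp] at h3
      rwa [mul_comm] at h3
    have h4 := (keyF (d.comp (C b * X ^ s'))).mp this
    rwa [mul_comm] at h4
  · intro hx
    obtain ⟨c, rfl⟩ := AdjoinRoot.mk_surjective x
    refine ⟨φ.symm (AdjoinRoot.mk _ c), ?_, φ.apply_symm_apply _⟩
    apply φ.injective
    rw [map_mul, map_zero, φ.apply_symm_apply, hφ, ← map_mul, AdjoinRoot.mk_eq_zero]
    rw [← map_mul, AdjoinRoot.mk_eq_zero] at hx
    have h1 : (X ^ n - 1 : F[X]) ∣ gF * c := by rwa [mul_comm] at hx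
    have h2 := (keyF c).mpr h1
    rwa [mul_comm] at h2
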